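/- Let φ(x) = 0 for x < λ and φ(x) = 1/(x+a) for x ≥ λ with λ + a > 0. Then φ^{*2}(x) = (2/(x+2a))·ln((x−2λ)/(λ+a) + 1) for x ≥ 2λ. -/

import Mathlib

open MeasureTheory

/-- Let `φ(x) = 0` for `x < λ` and `φ(x) = 1/(x+a)` for `x ≥ λ`, with `λ + a > 0`.
Then `φ^{*2}(x) = ∫ φ(x−t)·φ(t) dt = (2/(x+2a))·ln((x−2λ)/(λ+a) + 1)` for `x ≥ 2λ`. -/
theorem stmt_5 (lam a : ℝ) (hpos : 0 < lam + a) (φ : ℝ → ℝ)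
    (hφ₁ : ∀ x : ℝ, x < lam → φ x = 0)
    (hφ₂ : ∀ x : ℝ, lam ≤ x → φ x = 1 / (x + a)) :
    ∀ x : ℝ, 2 * lam ≤ x →
      (∫ t : ℝ, φ (x - t) * φ t)
        = (2 / (x + 2 * a)) * Real.log ((x - 2 * lam) / (lam + a) + 1) := by
  intro x hx
  have hle : lam ≤ x - lam := by linarith
  have hK : 0 < x + 2 * a := by linarith
  have hpt : ∀ t ∈ Set.Icc lam (x - lam), 0 < t + a ∧ 0 < x - t + a := by
    rintro t ⟨h1, h2⟩; constructor <;> linarith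
  have h1 : (fun t => φ (x - t) * φ t)
      = Set.indicator (Set.Icc lam (x - lam)) (fun t => 1 / ((x - t + a) * (t + a))) := by
    funext t
    by_cases ht : t ∈ Set.Icc lam (x - lam)
    · rw [Set.indicator_of_mem ht]
      obtain ⟨ha1, ha2⟩ := ht
      rw [hφ₂ t ha1, hφ₂ (x - t) (by linarith), one_div_mul_one_div]
    · rw [Set.indicator_of_notMem ht]
      rw [Set.mem_Icc, not_and_or] at ht
      rcases ht with h | h
      · push_neg at h
        rw [hφ₁ t h, mul_zero]
      · push_neg at h
        rw [hφ₁ (x - t) (by linarith), zero_mul]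
  rw [h1, integral_indicator measurableSet_Icc, integral_Icc_eq_integral_Ioc,
    ← intervalIntegral.integral_of_le hle]
  set F : ℝ → ℝ := fun t => (x + 2 * a)⁻¹ * (Real.log (t + a) - Real.log (x - t + a)) with hF
  have hderiv : ∀ t ∈ Set.uIcc lam (x - lam),
      HasDerivAt F (1 / ((x - t + a) * (t + a))) t := by
    intro t ht
    rw [Set.uIcc_of_le hle] at ht
    obtain ⟨hta, hxta⟩ := hpt t ht
    have hd1 : HasDerivAt (fun t => Real.log (t + a)) (t + a)⁻¹ t := by
      have := (hasDerivAt_id t).add_const a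
      simpa [Function.comp_def] using (Real.hasDerivAt_log hta.ne').comp t this
    have hd2 : HasDerivAt (fun t => Real.log (x - t + a)) (-(x - t + a)⁻¹) t := by
      have hlin : HasDerivAt (fun t : ℝ => x - t + a) (-1) t := by
        simpa using ((hasDerivAt_id t).const_sub x).add_const a
      have := (Real.hasDerivAt_log hxta.ne').comp t hlin
      simpa [mul_comm, Function.comp_def] using this
    have hmain := (hd1.sub hd2).const_mul (x + 2 * a)⁻¹
    convert hmain using 1
    · rfl
    · rfl
    · rfl
    have := hK.ne'
    field_simp
    rw [eq_div_iff (by linarith)]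
    ring
  have hint : IntervalIntegrable (fun t => 1 / ((x - t + a) * (t + a))) volume lam (x - lam) := by
    apply ContinuousOn.intervalIntegrable
    apply ContinuousOn.div continuousOn_const
    · fun_prop
    · intro t ht
      rw [Set.uIcc_of_le hle] at ht
      obtain ⟨hta, hxta⟩ := hpt t ht
      positivity
  rw [intervalIntegral.integral_eq_sub_of_hasDerivAt hderiv hint]
  have hxa : 0 < x - lam + a := by linarith
  have hrw : (x - 2 * lam) / (lam + a) + 1 = (x - lam + a) / (lam + a) := by
    field_simp
    ring
  rw [hrw, Real.log_div hxa.ne' hpos.ne']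
  simp only [hF]
  have h2 : x - (x - lam) + a = lam + a := by ring
  have h3 : x - lam + a = x - lam + a := rfl
  rw [h2]
  ring
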